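/- arXiv:1712.04007 — 3 statements merged into one kernel-verified Lean document; each statement's English description precedes it below -/
import Mathlib

section
/- Let A ∈ ℝ[t]^{n×n} be a matrix polynomial of degree at most d. Then A is singular (i.e., det A is the zero polynomial) if and only if there exists a nonzero vector b ∈ ℝ[t]^{n×1} whose entries all have degree at most nd such that A·b = 0. -/
open Polynomial Matrix

lemma natDegree_det_le' {m : ℕ} (d : ℕ) (M : Matrix (Fin m) (Fin m) (Polynomial ℝ))
    (h : ∀ i j, (M i j).natDegree ≤ d) : M.det.natDegree ≤ m * d := by
  rw [Matrix.det_apply']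
  apply Polynomial.natDegree_sum_le_of_forall_le
  intro σ _
  refine Polynomial.natDegree_mul_le.trans ?_
  have h1 : (((Equiv.Perm.sign σ : ℤ) : Polynomial ℝ)).natDegree = 0 :=
    Polynomial.natDegree_intCast _
  rw [h1, zero_add]
  refine Polynomial.natDegree_prod_le _ _ |>.trans ?_
  calc ∑ i : Fin m, (M (σ i) i).natDegree ≤ ∑ _i : Fin m, d :=
        Finset.sum_le_sum fun i _ => h _ _
    _ = m * d := by simp [Finset.sum_const, mul_comm]

lemma det_submatrix_inj_eq_zero {n : ℕ} (A : Matrix (Fin n) (Fin n) (Polynomial ℝ))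
    (hdet : A.det = 0) (f g : Fin n → Fin n) (hf : Function.Injective f)
    (hg : Function.Injective g) : (A.submatrix f g).det = 0 := by
  let e1 : Fin n ≃ Fin n := Equiv.ofBijective f ((Finite.injective_iff_bijective).mp hf)
  let e2 : Fin n ≃ Fin n := Equiv.ofBijective g ((Finite.injective_iff_bijective).mp hg)
  have he1 : ∀ x, f (e1.symm x) = x := fun x => e1.apply_symm_apply x
  have : A.submatrix f g = (A.submatrix e1 e1).submatrix id (e2.trans e1.symm) := by
    ext i j
    simp [e2, Matrix.submatrix_apply, he1, show ⇑e1 = f from rfl]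
  rw [this, Matrix.det_permute', Matrix.det_submatrix_equiv_self, hdet, mul_zero]

lemma key_construction (n d : ℕ) (A : Matrix (Fin n) (Fin n) (Polynomial ℝ))
    (hA : ∀ i j, (A i j).natDegree ≤ d) (hdet : A.det = 0) :
    ∃ b : Fin n → Polynomial ℝ,
      b ≠ 0 ∧ (∀ i, (b i).natDegree ≤ n * d) ∧ A.mulVec b = 0 := by
  classical
  set P : ℕ → Prop := fun r =>
    ∃ f g : Fin r → Fin n, Function.Injective f ∧ Function.Injective g ∧
      (A.submatrix f g).det ≠ 0 with hP
  have hP0 : P 0 := by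
    refine ⟨Fin.elim0, Fin.elim0, fun x => x.elim0, fun x => x.elim0, ?_⟩
    rw [Matrix.det_fin_zero]
    exact one_ne_zero
  have hPn : ¬ P n := by
    rintro ⟨f, g, hf, hg, hne⟩
    exact hne (det_submatrix_inj_eq_zero A hdet f g hf hg)
  set r : ℕ := Nat.findGreatest P n with hr
  have hPr : P r := Nat.findGreatest_spec (Nat.zero_le n) hP0
  have hrn : r < n := by
    rcases lt_or_eq_of_le (Nat.findGreatest_le (P := P) n) with h | h
    · exact h
    · exact absurd (h ▸ hPr) hPn
  have hPr1 : ¬ P (r + 1) := Nat.findGreatest_is_greatest (Nat.lt_succ_self r) hrn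
  obtain ⟨f, g, hf, hg, hne⟩ := hPr
  -- find a column not in the range of g
  have hj0 : ∃ j0 : Fin n, ∀ k, g k ≠ j0 := by
    by_contra h
    push_neg at h
    have hsurj : Function.Surjective g := fun j => h j
    have := Fintype.card_le_of_surjective g hsurj
    simp only [Fintype.card_fin] at this
    omega
  obtain ⟨j0, hj0⟩ := hj0
  set g' : Fin (r + 1) → Fin n := Fin.cons j0 g with hg'
  have hg'inj : Function.Injective g' := by
    intro a b hab
    rcases Fin.eq_zero_or_eq_succ a with rfl | ⟨a', rfl⟩ <;>
      rcases Fin.eq_zero_or_eq_succ b with rfl | ⟨b', rfl⟩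
    · rfl
    · simp only [hg', Fin.cons_zero, Fin.cons_succ] at hab
      exact absurd hab.symm (hj0 b')
    · simp only [hg', Fin.cons_zero, Fin.cons_succ] at hab
      exact absurd hab (hj0 a')
    · simp only [hg', Fin.cons_succ] at hab
      rw [hg hab]
  set M : Fin (r + 1) → Polynomial ℝ :=
    fun k => (A.submatrix f (g' ∘ k.succAbove)).det with hM
  set b : Fin n → Polynomial ℝ :=
    fun j => ∑ k : Fin (r + 1), if g' k = j then (-1) ^ (k : ℕ) * M k else 0 with hb
  have hbg' : ∀ k, b (g' k) = (-1) ^ (k : ℕ) * M k := by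
    intro k
    rw [hb]
    simp only
    rw [Finset.sum_eq_single k]
    · simp
    · intro k' _ hk'
      simp only [ite_eq_right_iff]
      intro h
      exact absurd (hg'inj h) hk'
    · simp
  refine ⟨b, ?_, ?_, ?_⟩
  · -- b ≠ 0
    intro h
    apply hne
    have h0 : b (g' 0) = 0 := by rw [h]; rfl
    rw [hbg'] at h0
    simp only [Fin.val_zero, pow_zero, one_mul, hM] at h0
    have : g' ∘ (0 : Fin (r + 1)).succAbove = g := by
      funext l
      simp [hg', Fin.succAbove_zero]
    rwa [this] at h0
  · -- degree bound
    intro j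
    rw [hb]
    apply Polynomial.natDegree_sum_le_of_forall_le
    intro k _
    split
    · refine Polynomial.natDegree_mul_le.trans ?_
      have h1 : ((-1 : Polynomial ℝ) ^ (k : ℕ)).natDegree = 0 := by
        rw [Polynomial.natDegree_pow, Polynomial.natDegree_neg, Polynomial.natDegree_one,
          mul_zero]
      rw [h1, zero_add, hM]
      refine (natDegree_det_le' d _ fun i l => hA _ _).trans ?_
      exact Nat.mul_le_mul_right d hrn.le
    · simp
  · -- A.mulVec b = 0
    funext i
    simp only [Pi.zero_apply]
    set B : Matrix (Fin (r + 1)) (Fin (r + 1)) (Polynomial ℝ) :=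
      A.submatrix (Fin.cons i f) g' with hB
    have hrow : ∀ k : Fin (r + 1), B.submatrix Fin.succ k.succAbove =
        A.submatrix f (g' ∘ k.succAbove) := by
      intro k
      have hcs : (Fin.cons i f : Fin (r + 1) → Fin n) ∘ Fin.succ = f := by
        funext p; simp
      rw [hB, Matrix.submatrix_submatrix, hcs]
    have expand : A.mulVec b i = B.det := by
      show ∑ j, A i j * b j = B.det
      rw [Matrix.det_succ_row_zero]
      calc ∑ j, A i j * b j
          = ∑ j, ∑ k : Fin (r + 1), (if g' k = j then A i j * ((-1) ^ (k : ℕ) * M k) else 0) := by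
            refine Finset.sum_congr rfl fun j _ => ?_
            rw [hb]
            simp only
            rw [Finset.mul_sum]
            exact Finset.sum_congr rfl fun k _ => by rw [mul_ite, mul_zero]
        _ = ∑ k : Fin (r + 1), ∑ j, (if g' k = j then A i j * ((-1) ^ (k : ℕ) * M k) else 0) :=
            Finset.sum_comm
        _ = ∑ k : Fin (r + 1), A i (g' k) * ((-1) ^ (k : ℕ) * M k) := by
            refine Finset.sum_congr rfl fun k _ => ?_
            rw [Finset.sum_ite_eq]
            simp
        _ = ∑ k : Fin (r + 1), (-1) ^ (k : ℕ) * B 0 k * (B.submatrix Fin.succ k.succAbove).det := by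
            refine Finset.sum_congr rfl fun k _ => ?_
            rw [hrow k, hB]
            simp only [Matrix.submatrix_apply, Fin.cons_zero, hM]
            ring
    rw [expand]
    by_cases hmem : ∃ p, f p = i
    · obtain ⟨p, hp⟩ := hmem
      have : B 0 = B p.succ := by
        funext q
        simp [hB, Matrix.submatrix_apply, Fin.cons_zero, Fin.cons_succ, hp]
      exact Matrix.det_zero_of_row_eq (Fin.succ_ne_zero p).symm this
    · push_neg at hmem
      by_contra hBne
      apply hPr1
      refine ⟨Fin.cons i f, g', ?_, hg'inj, ?_⟩
      · intro a b hab
        rcases Fin.eq_zero_or_eq_succ a with rfl | ⟨a', rfl⟩ <;>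
          rcases Fin.eq_zero_or_eq_succ b with rfl | ⟨b', rfl⟩
        · rfl
        · simp only [Fin.cons_zero, Fin.cons_succ] at hab
          exact absurd hab.symm (hmem b')
        · simp only [Fin.cons_zero, Fin.cons_succ] at hab
          exact absurd hab (hmem a')
        · simp only [Fin.cons_succ] at hab
          rw [hf hab]
      · exact fun h => hBne (hB ▸ h)


/-- A matrix polynomial `A ∈ ℝ[t]^{n×n}` of degree at most `d` is
singular (its determinant is the zero polynomial) if and only if there is a nonzero
vector `b ∈ ℝ[t]^{n×1}` whose entries all have degree at most `n·d` with `A·b = 0`. -/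
theorem nearest_singular_degree_bound
    (n d : ℕ) (A : Matrix (Fin n) (Fin n) (Polynomial ℝ))
    (hA : ∀ i j, (A i j).natDegree ≤ d) :
    A.det = 0 ↔
      ∃ b : Fin n → Polynomial ℝ,
        b ≠ 0 ∧ (∀ i, (b i).natDegree ≤ n * d) ∧ A.mulVec b = 0 := by
  constructor
  · exact key_construction n d A hA
  · rintro ⟨b, hb, -, hAb⟩
    have h1 : (A.adjugate * A).mulVec b = A.det • b := by
      rw [Matrix.adjugate_mul, Matrix.smul_mulVec, Matrix.one_mulVec]
    have h2 : (A.adjugate * A).mulVec b = 0 := by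
      rw [← Matrix.mulVec_mulVec, hAb, Matrix.mulVec_zero]
    obtain ⟨i, hi⟩ := Function.ne_iff.mp hb
    have h3 : A.det * b i = 0 := by
      have := congrFun (h1.symm.trans h2) i
      simpa [Pi.smul_apply, smul_eq_mul] using this
    rcases mul_eq_zero.mp h3 with h | h
    · exact h
    · exact absurd h hi
end

section
/- Let A ∈ ℝ[t]^{n×n} be a matrix polynomial of degree at most d whose rank over the rational function field ℝ(t) is s < n. Then there exists a nonzero vector b ∈ ℝ[t]^{n×1} whose entries all have degree at most s·d such that A·b = 0. -/
open Polynomial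

open Matrix

lemma aux_natDegree_det_le {k d : ℕ} (M : Matrix (Fin k) (Fin k) (Polynomial ℝ))
    (h : ∀ i j, (M i j).natDegree ≤ d) : M.det.natDegree ≤ k * d := by
  rw [Matrix.det_apply']
  refine Polynomial.natDegree_sum_le_of_forall_le _ _ fun σ _ => ?_
  refine (Polynomial.natDegree_mul_le).trans ?_
  have h1 : (Polynomial.natDegree ((Equiv.Perm.sign σ : ℤ) : Polynomial ℝ)) = 0 :=
    Polynomial.natDegree_intCast _
  rw [h1, zero_add]
  refine (Polynomial.natDegree_prod_le _ _).trans ?_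
  calc ∑ i, (M (σ i) i).natDegree ≤ ∑ _i : Fin k, d := Finset.sum_le_sum fun i _ => h _ _
    _ = k * d := by simp [mul_comm]

lemma aux_rank_submatrix_le {K : Type*} [Field K] {n m : ℕ}
    (A : Matrix (Fin n) (Fin n) K) (f g : Fin m → Fin n) :
    (A.submatrix f g).rank ≤ A.rank := by
  have h1 : ((1 : Matrix (Fin n) (Fin n) K).submatrix f (Equiv.refl (Fin n))) * A
      = A.submatrix f id := by
    rw [Matrix.one_submatrix_mul]; rfl
  have h2 : (A.submatrix f id) * ((1 : Matrix (Fin n) (Fin n) K).submatrix (Equiv.refl (Fin n)) g)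
      = A.submatrix f g := by
    rw [Matrix.mul_submatrix_one]; rfl
  calc (A.submatrix f g).rank
      = (((1 : Matrix (Fin n) (Fin n) K).submatrix f (Equiv.refl (Fin n))) * A
        * ((1 : Matrix (Fin n) (Fin n) K).submatrix (Equiv.refl (Fin n)) g)).rank := by
        rw [h1, h2]
    _ ≤ (((1 : Matrix (Fin n) (Fin n) K).submatrix f (Equiv.refl (Fin n))) * A).rank :=
        Matrix.rank_mul_le_left _ _
    _ ≤ A.rank := Matrix.rank_mul_le_right _ _

lemma aux_exists_li_cols {K : Type*} [Field K] {m n s : ℕ}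
    (A : Matrix (Fin m) (Fin n) K) (h : A.rank = s) :
    ∃ c : Fin s → Fin n, LinearIndependent K (fun k => Aᵀ (c k)) := by
  obtain ⟨b, hbsub, hspan, hli⟩ := exists_linearIndependent K (Set.range Aᵀ)
  have hfin : b.Finite := (Set.finite_range Aᵀ).subset hbsub
  haveI := hfin.fintype
  have hcard : Fintype.card b = s := by
    rw [← Set.toFinset_card, ← finrank_span_set_eq_card hli, hspan]
    exact (Matrix.rank_eq_finrank_span_cols A).symm.trans h
  obtain e := (Fintype.equivFinOfCardEq hcard).symm
  choose c hc using fun k : Fin s => hbsub (e k).2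
  have hli2 : LinearIndependent K (fun k : Fin s => ((e k : _) : Fin m → K)) :=
    hli.comp e e.injective
  refine ⟨c, ?_⟩
  have : (fun k : Fin s => Aᵀ (c k)) = fun k => ((e k : _) : Fin m → K) := funext fun k => hc k
  rw [this]; exact hli2

lemma aux_exists_unit_submatrix {K : Type*} [Field K] {n s : ℕ}
    (A : Matrix (Fin n) (Fin n) K) (h : A.rank = s) :
    ∃ r c : Fin s → Fin n, IsUnit (A.submatrix r c) := by
  obtain ⟨c, hc⟩ := aux_exists_li_cols A h
  set B := A.submatrix id c with hB
  have hBt : Bᵀ = fun k => Aᵀ (c k) := rfl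
  have hrB : B.rank = s := by
    rw [Matrix.rank_eq_finrank_span_cols, show B.col = fun k => Aᵀ (c k) from hBt, finrank_span_eq_card hc, Fintype.card_fin]
  have hrBt : Bᵀ.rank = s := by rw [Matrix.rank_transpose]; exact hrB
  obtain ⟨r, hr⟩ := aux_exists_li_cols Bᵀ hrBt
  refine ⟨r, c, ?_⟩
  rw [← Matrix.linearIndependent_rows_iff_isUnit]
  have : (fun i => (A.submatrix r c) i) = fun k => Bᵀᵀ (r k) := by
    funext k; funext l; simp [hB]
  change LinearIndependent K (fun i => (A.submatrix r c) i); rw [this]; exact hr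

lemma aux_det_eq_zero {K : Type*} [Field K] {s : ℕ}
    (M : Matrix (Fin (s + 1)) (Fin (s + 1)) K) (h : M.rank ≤ s) : M.det = 0 := by
  by_contra hd
  have : IsUnit M := (Matrix.isUnit_iff_isUnit_det M).2 (isUnit_iff_ne_zero.2 hd)
  have := Matrix.rank_of_isUnit M this
  rw [this, Fintype.card_fin] at h
  omega

/-- If a matrix polynomial `A ∈ ℝ[t]^{n×n}` of degree at most `d`
has rank `s < n` over the rational function field `ℝ(t)`, then there is a nonzero
vector `b ∈ ℝ[t]^{n×1}` whose entries all have degree at most `s·d` with `A·b = 0`. -/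
theorem kernel_vector_of_rank_lt
    (n d s : ℕ) (A : Matrix (Fin n) (Fin n) (Polynomial ℝ))
    (hA : ∀ i j, (A i j).natDegree ≤ d)
    (hrank : (A.map (algebraMap (Polynomial ℝ) (RatFunc ℝ))).rank = s)
    (hs : s < n) :
    ∃ b : Fin n → Polynomial ℝ,
      b ≠ 0 ∧ (∀ i, (b i).natDegree ≤ s * d) ∧ A.mulVec b = 0 := by
  classical
  set φ := algebraMap (Polynomial ℝ) (RatFunc ℝ) with hφ
  have hφinj : Function.Injective φ := RatFunc.algebraMap_injective ℝ
  set A' := A.map φ with hA'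
  obtain ⟨r, c, hU⟩ := aux_exists_unit_submatrix A' hrank
  -- a column index outside the range of c
  have hj : ∃ j : Fin n, ∀ k, c k ≠ j := by
    by_contra hcon
    push_neg at hcon
    have hsurj : Function.Surjective c := fun j => by
      obtain ⟨k, hk⟩ := hcon j; exact ⟨k, hk⟩
    have := Fintype.card_le_of_surjective c hsurj
    simp at this; omega
  obtain ⟨j, hj⟩ := hj
  set c' : Fin (s + 1) → Fin n := Fin.snoc c j with hc'
  set cof : Fin (s + 1) → Polynomial ℝ :=
    fun k => (-1 : Polynomial ℝ) ^ (s + (k : ℕ)) * (A.submatrix r (c' ∘ k.succAbove)).det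
    with hcof
  set b : Fin n → Polynomial ℝ := fun m => ∑ k, if c' k = m then cof k else 0 with hb
  -- determinant of any bordered (s+1)×(s+1) submatrix vanishes
  have hdet0 : ∀ i : Fin n, (A.submatrix (Fin.snoc r i) c').det = 0 := by
    intro i
    have hrk : (A'.submatrix (Fin.snoc r i) c').rank ≤ s := by
      calc (A'.submatrix (Fin.snoc r i) c').rank ≤ A'.rank :=
            aux_rank_submatrix_le A' _ _
        _ = s := hrank
    have hdz : (A'.submatrix (Fin.snoc r i) c').det = 0 := aux_det_eq_zero _ hrk
    apply hφinj
    rw [map_zero, RingHom.map_det, RingHom.mapMatrix_apply, ← Matrix.submatrix_map]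
    exact hdz
  -- key identity : expansion of the bordered determinant along the last row
  have hexp : ∀ i : Fin n, ∑ k : Fin (s + 1), A i (c' k) * cof k = 0 := by
    intro i
    have := Matrix.det_succ_row (A.submatrix (Fin.snoc r i) c') (Fin.last s)
    rw [hdet0 i] at this
    have heq : ∀ k : Fin (s + 1),
        (-1 : Polynomial ℝ) ^ ((Fin.last s : ℕ) + (k : ℕ)) *
          (A.submatrix (Fin.snoc r i) c') (Fin.last s) k *
          ((A.submatrix (Fin.snoc r i) c').submatrix (Fin.last s).succAbove k.succAbove).det
        = A i (c' k) * cof k := by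
      intro k
      have h1 : (A.submatrix (Fin.snoc r i) c') (Fin.last s) k = A i (c' k) := by
        simp [Matrix.submatrix_apply]
      have h2 : (A.submatrix (Fin.snoc r i) c').submatrix (Fin.last s).succAbove k.succAbove
          = A.submatrix r (c' ∘ k.succAbove) := by
        rw [Matrix.submatrix_submatrix]
        funext l
        simp [Fin.succAbove_last]
      rw [h1, h2, hcof]
      simp [Fin.val_last]
      ring
    rw [Finset.sum_congr rfl (fun k _ => heq k)] at this
    exact this.symm
  -- b at j is the nonzero minor
  have hbj : b j = (A.submatrix r c).det := by
    show (∑ k : Fin (s + 1), if c' k = j then cof k else 0) = (A.submatrix r c).det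
    rw [Finset.sum_eq_single (Fin.last s)]
    · rw [if_pos (by simp [hc'])]
      have hcc : c' ∘ (Fin.last s).succAbove = c := by
        funext l; simp [hc', Fin.succAbove_last]
      show (-1 : Polynomial ℝ) ^ (s + ((Fin.last s : Fin (s+1)) : ℕ)) *
        (A.submatrix r (c' ∘ (Fin.last s).succAbove)).det = (A.submatrix r c).det
      rw [hcc]
      simp [Even.neg_one_pow ⟨s, rfl⟩]
    · intro k _ hk
      rw [if_neg]
      obtain ⟨k', rfl⟩ := Fin.exists_castSucc_eq.mpr hk
      simp [hc']
      exact hj k'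
    · intro h; exact absurd (Finset.mem_univ _) h
  have hbjne : b j ≠ 0 := by
    rw [hbj]
    intro hz
    have : (A'.submatrix r c).det = 0 := by
      show ((A.map φ).submatrix r c).det = 0
      rw [Matrix.submatrix_map, ← RingHom.mapMatrix_apply, ← RingHom.map_det, hz, map_zero]
    exact (isUnit_iff_ne_zero.mp ((Matrix.isUnit_iff_isUnit_det _).mp hU)) this
  refine ⟨b, ?_, ?_, ?_⟩
  · intro h; exact hbjne (by rw [h]; rfl)
  · intro m
    rw [hb]
    refine Polynomial.natDegree_sum_le_of_forall_le _ _ fun k _ => ?_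
    split
    · rw [hcof]
      refine Polynomial.natDegree_mul_le.trans ?_
      have h1 : ((-1 : Polynomial ℝ) ^ (s + (k : ℕ))).natDegree = 0 := by
        simp
      rw [h1, zero_add]
      exact aux_natDegree_det_le _ (fun i' j' => hA _ _)
    · simp
  · funext i
    have : A.mulVec b i = ∑ k : Fin (s + 1), A i (c' k) * cof k := by
      rw [Matrix.mulVec, dotProduct]
      rw [hb]
      simp only [Finset.mul_sum, mul_ite, mul_zero]
      rw [Finset.sum_comm]
      refine Finset.sum_congr rfl fun k _ => ?_
      rw [Finset.sum_ite_eq Finset.univ (c' k) (fun m => A i m * cof k)]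
      simp
    rw [this, hexp i]; rfl
end

section
/- Let A ∈ ℝ[t]^{n×n} be a matrix polynomial of degree at most d, set μ = nd+1, and let Â ∈ ℝ^{n(μ+d)×nμ} be its ℝ-embedding. Then A is singular (det A is the zero polynomial) if and only if Â does not have full column rank, i.e., rank(Â) < nμ. -/
open Polynomial

/-- The Toeplitz convolution matrix `φ(a) ∈ ℝ^{(μ+d)×μ}` of a polynomial `a`. -/
noncomputable def phi (d μ : ℕ) (a : Polynomial ℝ) : Matrix (Fin (μ + d)) (Fin μ) ℝ :=
  fun i j => if (j : ℕ) ≤ (i : ℕ) then a.coeff ((i : ℕ) - (j : ℕ)) else 0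

/-- The ℝ-embedding `Â ∈ ℝ^{n(μ+d) × nμ}` (with `μ = nd+1`) of a matrix polynomial
`A ∈ ℝ[t]^{n×n}` of degree at most `d`: the `(i,j)` block is `φ(A_{ij})`. -/
noncomputable def embedMat (n d : ℕ) (A : Matrix (Fin n) (Fin n) (Polynomial ℝ)) :
    Matrix (Fin n × Fin (n * d + 1 + d)) (Fin n × Fin (n * d + 1)) ℝ :=
  fun p q => phi d (n * d + 1) (A p.1 q.1) p.2 q.2

/-- The polynomial vector associated to a coefficient vector. -/
noncomputable def toPolyVec (n μ : ℕ) (x : Fin n × Fin μ → ℝ) : Fin n → Polynomial ℝ :=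
  fun i => ∑ q : Fin μ, C (x (i, q)) * X ^ (q : ℕ)

lemma coeff_toPolyVec (n μ : ℕ) (x : Fin n × Fin μ → ℝ) (i : Fin n) (m : ℕ) :
    (toPolyVec n μ x i).coeff m = if h : m < μ then x (i, ⟨m, h⟩) else 0 := by
  simp only [toPolyVec, finset_sum_coeff, coeff_C_mul, coeff_X_pow]
  split
  · rename_i h
    rw [Finset.sum_eq_single (⟨m, h⟩ : Fin μ)]
    · simp
    · intro q _ hq
      have : m ≠ (q : ℕ) := by
        intro he; apply hq; exact Fin.ext he.symm
      simp [this]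
    · simp
  · rename_i h
    apply Finset.sum_eq_zero
    intro q _
    have : m ≠ (q : ℕ) := by
      intro he; exact h (he ▸ q.isLt)
    simp [this]

lemma toPolyVec_eq_zero_iff (n μ : ℕ) (x : Fin n × Fin μ → ℝ) :
    toPolyVec n μ x = 0 ↔ x = 0 := by
  constructor
  · intro h
    funext p
    have h2 := congrArg (fun f => Polynomial.coeff (f p.1) (p.2 : ℕ)) h
    simp only [coeff_toPolyVec, Pi.zero_apply, coeff_zero] at h2
    rw [dif_pos p.2.isLt] at h2
    simpa using h2
  · rintro rfl
    funext i
    simp [toPolyVec]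

lemma coeff_mulVec_toPolyVec (n μ : ℕ) (A : Matrix (Fin n) (Fin n) (Polynomial ℝ))
    (x : Fin n × Fin μ → ℝ) (i : Fin n) (s : ℕ) :
    ((A.mulVec (toPolyVec n μ x)) i).coeff s
      = ∑ j : Fin n, ∑ q : Fin μ,
          (if (q : ℕ) ≤ s then (A i j).coeff (s - (q : ℕ)) else 0) * x (j, q) := by
  rw [Matrix.mulVec, dotProduct, finset_sum_coeff]
  apply Finset.sum_congr rfl
  intro j _
  rw [toPolyVec, Finset.mul_sum, finset_sum_coeff]
  apply Finset.sum_congr rfl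
  intro q _
  rw [show A i j * (C (x (j, q)) * X ^ (q : ℕ)) = C (x (j, q)) * (A i j * X ^ (q : ℕ)) by ring,
    coeff_C_mul, coeff_mul_X_pow']
  split <;> ring

lemma embed_mulVec_apply (n d : ℕ) (A : Matrix (Fin n) (Fin n) (Polynomial ℝ))
    (x : Fin n × Fin (n * d + 1) → ℝ) (p : Fin n × Fin (n * d + 1 + d)) :
    (embedMat n d A).mulVec x p
      = ((A.mulVec (toPolyVec n (n * d + 1) x)) p.1).coeff (p.2 : ℕ) := by
  rw [coeff_mulVec_toPolyVec, Matrix.mulVec, dotProduct, Fintype.sum_prod_type]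
  apply Finset.sum_congr rfl
  intro j _
  apply Finset.sum_congr rfl
  intro q _
  rfl

lemma coeff_mulVec_toPolyVec_high (n d : ℕ) (A : Matrix (Fin n) (Fin n) (Polynomial ℝ))
    (hA : ∀ i j, (A i j).natDegree ≤ d)
    (x : Fin n × Fin (n * d + 1) → ℝ) (i : Fin n) (s : ℕ) (hs : n * d + 1 + d ≤ s) :
    ((A.mulVec (toPolyVec n (n * d + 1) x)) i).coeff s = 0 := by
  rw [coeff_mulVec_toPolyVec]
  apply Finset.sum_eq_zero
  intro j _
  apply Finset.sum_eq_zero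
  intro q _
  rw [if_pos (by omega : (q : ℕ) ≤ s)]
  have hq := q.isLt
  rw [Polynomial.coeff_eq_zero_of_natDegree_lt (lt_of_le_of_lt (hA i j) (by omega)), zero_mul]

lemma embed_mulVec_eq_zero_iff (n d : ℕ) (A : Matrix (Fin n) (Fin n) (Polynomial ℝ))
    (hA : ∀ i j, (A i j).natDegree ≤ d) (x : Fin n × Fin (n * d + 1) → ℝ) :
    (embedMat n d A).mulVec x = 0 ↔ A.mulVec (toPolyVec n (n * d + 1) x) = 0 := by
  constructor
  · intro h
    funext i
    apply Polynomial.ext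
    intro s
    by_cases hs : s < n * d + 1 + d
    · have h2 := congrFun h (i, ⟨s, hs⟩)
      rw [embed_mulVec_apply] at h2
      simpa using h2
    · simpa using coeff_mulVec_toPolyVec_high n d A hA x i s (le_of_not_gt hs)
  · intro h
    funext p
    rw [embed_mulVec_apply, h]
    simp


/-- A matrix polynomial `A ∈ ℝ[t]^{n×n}` of degree at most `d` is
singular (`det A` is the zero polynomial) if and only if its ℝ-embedding
`Â ∈ ℝ^{n(μ+d) × nμ}` (with `μ = nd+1`) does not have full column rank, i.e.
`rank Â < nμ`. -/
theorem det_eq_zero_iff_embed_rank_lt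
    (n d : ℕ) (A : Matrix (Fin n) (Fin n) (Polynomial ℝ))
    (hA : ∀ i j, (A i j).natDegree ≤ d) :
    A.det = 0 ↔ (embedMat n d A).rank < n * (n * d + 1) := by
  constructor
  · -- det = 0 → rank small
    intro hdet
    set μ := n * d + 1 with hμ
    set K := FractionRing (Polynomial ℝ)
    set f := algebraMap (Polynomial ℝ) K with hf
    have finj : Function.Injective f := IsFractionRing.injective _ _
    set Ak : Matrix (Fin n) (Fin n) K := A.map f with hAk
    have hdetK : Ak.det = 0 := by
      rw [hAk, ← RingHom.mapMatrix_apply, ← RingHom.map_det, hdet, map_zero]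
    obtain ⟨v, hv, hv0⟩ := Matrix.exists_mulVec_eq_zero_iff.mpr hdetK
    set W := LinearMap.range Ak.mulVecLin with hW
    have hWne : W ≠ ⊤ := by
      intro htop
      have hsurj : Function.Surjective Ak.mulVecLin := LinearMap.range_eq_top.mp htop
      have hinjK : Function.Injective Ak.mulVecLin :=
        LinearMap.injective_iff_surjective.mpr hsurj
      apply hv
      have : Ak.mulVecLin v = Ak.mulVecLin 0 := by
        simpa [Matrix.mulVecLin_apply] using hv0
      exact hinjK this
    obtain ⟨i₀, hi₀⟩ : ∃ i₀ : Fin n, (fun j => if i₀ = j then (1 : K) else 0) ∉ W := by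
      by_contra hall
      push_neg at hall
      apply hWne
      rw [eq_top_iff]
      intro w _
      rw [pi_eq_sum_univ w]
      exact Submodule.sum_mem _ fun i _ => Submodule.smul_mem _ _ (hall i)
    -- the projection deleting the i₀ rows
    let D : (Fin n × Fin (μ + d) → ℝ) →ₗ[ℝ] ({i : Fin n // i ≠ i₀} × Fin (μ + d) → ℝ) :=
      { toFun := fun y p => y (p.1.1, p.2)
        map_add' := by intros; rfl
        map_smul' := by intros; rfl }
    have hinj : Function.Injective
        (D.comp (Submodule.subtype (LinearMap.range (embedMat n d A).mulVecLin))) := by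
      rw [← LinearMap.ker_eq_bot, LinearMap.ker_eq_bot']
      rintro ⟨y, hy⟩ hDy
      obtain ⟨x, hx⟩ := hy
      have hx' : (embedMat n d A).mulVec x = y := hx
      set c := A.mulVec (toPolyVec n μ x) with hc
      have hcoeff : ∀ (i : Fin n) (s : ℕ), (c i).coeff s
          = if hs : s < μ + d then y (i, ⟨s, hs⟩) else 0 := by
        intro i s
        split
        · rename_i hs
          rw [← hx', embed_mulVec_apply n d A x (i, ⟨s, hs⟩)]
        · rename_i hs
          exact coeff_mulVec_toPolyVec_high n d A hA x i s (le_of_not_gt hs)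
      have hci : ∀ i : Fin n, i ≠ i₀ → c i = 0 := by
        intro i hi
        apply Polynomial.ext
        intro s
        rw [hcoeff]
        split
        · rename_i hs
          have h2 := congrFun hDy (⟨i, hi⟩, ⟨s, hs⟩)
          simpa [D] using h2
        · simp
      have hmem : (fun j => f (c j)) ∈ W := by
        refine ⟨fun j => f (toPolyVec n μ x j), ?_⟩
        funext j
        rw [Matrix.mulVecLin_apply]
        exact (RingHom.map_mulVec f A (toPolyVec n μ x) j).symm
      have hc0 : c i₀ = 0 := by
        by_contra hne
        apply hi₀
        have hfne : f (c i₀) ≠ 0 := fun h => hne (finj (by simpa using h))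
        have hsm : (f (c i₀))⁻¹ • (fun j => f (c j)) ∈ W := Submodule.smul_mem _ _ hmem
        have heq : (f (c i₀))⁻¹ • (fun j => f (c j))
            = fun j => if i₀ = j then (1 : K) else 0 := by
          funext j
          by_cases hj : i₀ = j
          · subst hj
            simp [inv_mul_cancel₀ hfne]
          · have : c j = 0 := hci j (fun h => hj h.symm)
            simp [hj, this]
        rwa [heq] at hsm
      have hcz : c = 0 := by
        funext i
        by_cases hi : i = i₀
        · rw [hi]; exact hc0
        · exact hci i hi
      have hy0 : y = 0 := by
        funext p
        have := hcoeff p.1 p.2 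
        rw [hcz] at this
        simp only [Pi.zero_apply, coeff_zero] at this
        rw [dif_pos p.2.isLt] at this
        simpa using this.symm
      exact Subtype.ext hy0
    have hle := LinearMap.finrank_le_finrank_of_injective hinj
    have hcard : Module.finrank ℝ ({i : Fin n // i ≠ i₀} × Fin (μ + d) → ℝ)
        = (n - 1) * (μ + d) := by
      rw [Module.finrank_pi, Fintype.card_prod, Fintype.card_fin]
      congr 1
      rw [Fintype.card_subtype_compl, Fintype.card_fin, Fintype.card_subtype_eq]
    rw [hcard] at hle
    have hn : 1 ≤ n := i₀.pos
    obtain ⟨m, rfl⟩ : ∃ m, n = m + 1 := ⟨n - 1, by omega⟩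
    have hfin : (m + 1 - 1) * (μ + d) < (m + 1) * μ := by
      rw [hμ]
      simp only [Nat.add_sub_cancel]
      nlinarith
    exact lt_of_le_of_lt hle hfin
  · -- rank small → det = 0
    intro hrank
    have hex : ∃ x : Fin n × Fin (n * d + 1) → ℝ, x ≠ 0 ∧ (embedMat n d A).mulVec x = 0 := by
      by_contra hc
      push_neg at hc
      have hinj : Function.Injective (embedMat n d A).mulVecLin := by
        rw [← LinearMap.ker_eq_bot, LinearMap.ker_eq_bot']
        intro x hx
        by_contra hxne
        exact (hc x hxne) (by simpa [Matrix.mulVecLin_apply] using hx)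
      have : (embedMat n d A).rank = n * (n * d + 1) := by
        rw [Matrix.rank, LinearMap.finrank_range_of_inj hinj, Module.finrank_pi,
          Fintype.card_prod, Fintype.card_fin, Fintype.card_fin]
      omega
    obtain ⟨x, hx, hx0⟩ := hex
    rw [embed_mulVec_eq_zero_iff n d A hA x] at hx0
    have hb : toPolyVec n (n * d + 1) x ≠ 0 := by
      rw [Ne, toPolyVec_eq_zero_iff]; exact hx
    exact Matrix.exists_mulVec_eq_zero_iff.mp ⟨toPolyVec n (n * d + 1) x, hb, hx0⟩
end
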